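/- Let 𝒜 be a hereditary abelian category and λ : K₀(𝒜) → ℤ a ℤ-linear form. The full subcategory 𝒜(λ) of objects X with λ([X]) = 0 and λ([X']) ≤ 0 for all subobjects X' ⊆ X is closed under kernels: if f : X → Y is a morphism between objects of 𝒜(λ), then Ker(f) ∈ 𝒜(λ). -/

import Mathlib

open CategoryTheory CategoryTheory.Limits

/-- Let `𝒜` be a hereditary abelian category and `λ : K₀(𝒜) → ℤ` a linear form,
i.e. a function `lam` on objects additive on short exact sequences.  The subcategory `𝒜(λ)`
of objects `X` with `lam X = 0` and `lam X' ≤ 0` for all subobjects `X' ⊆ X` is closed under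
kernels: for a morphism `f : X ⟶ Y` with `X, Y ∈ 𝒜(λ)`, the kernel of `f` again lies
in `𝒜(λ)`. -/
theorem controlled_subcategory_closed_under_kernels
    {C : Type*} [Category C] [Abelian C] (lam : C → ℤ)
    (hadd : ∀ T : ShortComplex C, T.ShortExact → lam T.X₂ = lam T.X₁ + lam T.X₃)
    (X Y : C) (f : X ⟶ Y)
    (hX : lam X = 0 ∧ ∀ (Z : C) (g : Z ⟶ X), Mono g → lam Z ≤ 0)
    (hY : lam Y = 0 ∧ ∀ (Z : C) (g : Z ⟶ Y), Mono g → lam Z ≤ 0) :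
    lam (kernel f) = 0 ∧ ∀ (Z : C) (g : Z ⟶ kernel f), Mono g → lam Z ≤ 0 := by
  have hsub : ∀ (Z : C) (g : Z ⟶ kernel f), Mono g → lam Z ≤ 0 := by
    intro Z g hg
    exact hX.2 Z (g ≫ kernel.ι f) (mono_comp g (kernel.ι f))
  refine ⟨?_, hsub⟩
  -- short exact sequence 0 → ker f → X → im f → 0
  set S : ShortComplex C := ShortComplex.mk (kernel.ι f) (factorThruImage f)
    (by rw [← cancel_mono (image.ι f)]; simp) with hS
  have hex : S.Exact := by
    have e := ShortComplex.exact_iff_of_epi_of_isIso_of_mono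
      (φ := ({ τ₁ := 𝟙 _, τ₂ := 𝟙 _, τ₃ := image.ι f, comm₁₂ := by simp [S], comm₂₃ := by simp [S] } :
        S ⟶ ShortComplex.mk (kernel.ι f) f (by simp)))
    exact e.mpr (ShortComplex.exact_kernel f)
  have hse : S.ShortExact := ShortComplex.ShortExact.mk' hex inferInstance inferInstance
  have h := hadd S hse
  have h1 : lam (kernel f) ≤ 0 := hsub _ (𝟙 _) inferInstance
  have h2 : lam (image f) ≤ 0 := hY.2 _ (image.ι f) inferInstance
  have hX0 := hX.1
  simp only [hS] at h
  omega
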